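/- Let h₁,…,h_ℓ ∈ ℂ(T) be rational functions with h_i = f_i/g_i, where f_i, g_i ∈ ℂ[T] are nonzero polynomials and Z(f₁⋯f_ℓ) ∩ Z(g₁⋯g_ℓ) = ∅. Then for all natural numbers n₁,…,n_ℓ ≥ 0 and every t ∈ ℂ, the multiplicity of t as a zero of h₁^{n₁}⋯h_ℓ^{n_ℓ} − 1, i.e., the multiplicity of t as a root of the polynomial f₁^{n₁}⋯f_ℓ^{n_ℓ} − g₁^{n₁}⋯g_ℓ^{n_ℓ}, is at most Σ_{i=1}^{ℓ} (deg f_i + deg g_i). -/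

import Mathlib

open Polynomial

lemma aux_rm_le_deg (p : Polynomial ℂ) (hp : p ≠ 0) (t : ℂ) :
    p.rootMultiplicity t ≤ p.natDegree := by
  have h := Polynomial.natDegree_le_of_dvd (p.pow_rootMultiplicity_dvd t) hp
  simpa [Polynomial.natDegree_pow, Polynomial.natDegree_X_sub_C] using h

lemma aux_deriv_prod {ι : Type*} [DecidableEq ι] (s : Finset ι) (f : ι → Polynomial ℂ) :
    derivative (∏ i ∈ s, f i) =
      ∑ i ∈ s, (∏ j ∈ s.erase i, f j) * derivative (f i) := by
  induction s using Finset.induction_on with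
  | empty => simp
  | @insert a s ha ih =>
    rw [Finset.prod_insert ha, derivative_mul, ih, Finset.sum_insert ha,
      Finset.erase_insert ha, Finset.mul_sum]
    rw [mul_comm (derivative (f a))]
    congr 1
    refine Finset.sum_congr rfl fun i hi => ?_
    have hai : a ≠ i := fun h => ha (h ▸ hi)
    rw [Finset.erase_insert_of_ne hai, Finset.prod_insert (fun h => ha (Finset.mem_of_mem_erase h))]
    ring

lemma aux_key (ℓ : ℕ) (f g : Fin ℓ → Polynomial ℂ) (n : Fin ℓ → ℕ) :
    derivative (∏ i, f i ^ n i) * (∏ i, g i ^ n i)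
      - (∏ i, f i ^ n i) * derivative (∏ i, g i ^ n i)
    = (∏ i, (f i * g i) ^ (n i - 1)) *
      ∑ i, C ((n i : ℂ)) * (derivative (f i) * g i - f i * derivative (g i)) *
        ∏ j ∈ Finset.univ.erase i, (if n j = 0 then 1 else f j * g j) := by
  have hprod : ∀ s : Finset (Fin ℓ),
      (∏ j ∈ s, f j ^ n j) * (∏ j ∈ s, g j ^ n j)
        = (∏ j ∈ s, (f j * g j) ^ (n j - 1)) *
          ∏ j ∈ s, (if n j = 0 then 1 else f j * g j) := by
    intro s
    rw [← Finset.prod_mul_distrib, ← Finset.prod_mul_distrib]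
    refine Finset.prod_congr rfl fun j _ => ?_
    cases hnj : n j with
    | zero => simp
    | succ m => simp only [hnj, Nat.succ_sub_one, if_neg (Nat.succ_ne_zero m), mul_pow, pow_succ]; ring
  rw [aux_deriv_prod, aux_deriv_prod, Finset.sum_mul, Finset.mul_sum, Finset.mul_sum,
    ← Finset.sum_sub_distrib]
  refine Finset.sum_congr rfl fun i _ => ?_
  cases hni : n i with
  | zero => simp [hni]
  | succ m =>
    have hF : (∏ j, f j ^ n j) = f i ^ n i * ∏ j ∈ Finset.univ.erase i, f j ^ n j :=
      (Finset.mul_prod_erase _ _ (Finset.mem_univ i)).symm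
    have hG : (∏ j, g j ^ n j) = g i ^ n i * ∏ j ∈ Finset.univ.erase i, g j ^ n j :=
      (Finset.mul_prod_erase _ _ (Finset.mem_univ i)).symm
    have hE : (∏ j, (f j * g j) ^ (n j - 1))
        = (f i * g i) ^ (n i - 1) * ∏ j ∈ Finset.univ.erase i, (f j * g j) ^ (n j - 1) :=
      (Finset.mul_prod_erase _ _ (Finset.mem_univ i)).symm
    rw [hF, hG, hE, derivative_pow, derivative_pow, hni]
    simp only [Nat.succ_sub_one]
    linear_combination (C ((m + 1 : ℕ) : ℂ) * (f i * g i) ^ m *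
      (derivative (f i) * g i - f i * derivative (g i))) * hprod (Finset.univ.erase i)

lemma aux_deg (ℓ : ℕ) (f g : Fin ℓ → Polynomial ℂ) (n : Fin ℓ → ℕ) :
    (∑ i, C ((n i : ℂ)) * (derivative (f i) * g i - f i * derivative (g i)) *
        ∏ j ∈ Finset.univ.erase i, (if n j = 0 then 1 else f j * g j)).natDegree
      ≤ (∑ i, ((f i).natDegree + (g i).natDegree)) - 1 := by
  apply natDegree_sum_le_of_forall_le
  intro i _
  by_cases hA : derivative (f i) * g i - f i * derivative (g i) = 0
  · simp [hA]
  have hdi : 1 ≤ (f i).natDegree + (g i).natDegree := by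
    by_contra h
    push_neg at h
    have hf0 : (f i).natDegree = 0 := by omega
    have hg0 : (g i).natDegree = 0 := by omega
    obtain ⟨a, ha⟩ := Polynomial.natDegree_eq_zero.mp hf0
    obtain ⟨b, hb⟩ := Polynomial.natDegree_eq_zero.mp hg0
    apply hA
    rw [← ha, ← hb]
    simp
  have h1 : (derivative (f i) * g i).natDegree ≤ (f i).natDegree + (g i).natDegree - 1 := by
    rcases eq_or_ne ((f i).natDegree) 0 with h | h
    · obtain ⟨a, ha⟩ := Polynomial.natDegree_eq_zero.mp h
      rw [← ha]; simp
    · refine natDegree_mul_le.trans ?_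
      have := natDegree_derivative_le (f i)
      omega
  have h2 : (f i * derivative (g i)).natDegree ≤ (f i).natDegree + (g i).natDegree - 1 := by
    rcases eq_or_ne ((g i).natDegree) 0 with h | h
    · obtain ⟨a, ha⟩ := Polynomial.natDegree_eq_zero.mp h
      rw [← ha]; simp
    · refine natDegree_mul_le.trans ?_
      have := natDegree_derivative_le (g i)
      omega
  have hA' : (derivative (f i) * g i - f i * derivative (g i)).natDegree
      ≤ (f i).natDegree + (g i).natDegree - 1 :=
    (natDegree_sub_le _ _).trans (max_le h1 h2)
  have hc : (∏ j ∈ Finset.univ.erase i, (if n j = 0 then 1 else f j * g j)).natDegree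
      ≤ ∑ j ∈ Finset.univ.erase i, ((f j).natDegree + (g j).natDegree) := by
    refine (natDegree_prod_le _ _).trans (Finset.sum_le_sum fun j _ => ?_)
    split_ifs
    · simp
    · exact natDegree_mul_le
  have hsum : (f i).natDegree + (g i).natDegree
      + ∑ j ∈ Finset.univ.erase i, ((f j).natDegree + (g j).natDegree)
      = ∑ j, ((f j).natDegree + (g j).natDegree) :=
    Finset.add_sum_erase Finset.univ (fun j => (f j).natDegree + (g j).natDegree) (Finset.mem_univ i)
  calc (C ((n i : ℂ)) * (derivative (f i) * g i - f i * derivative (g i)) *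
        ∏ j ∈ Finset.univ.erase i, (if n j = 0 then 1 else f j * g j)).natDegree
      ≤ (C ((n i : ℂ)) * (derivative (f i) * g i - f i * derivative (g i))).natDegree
        + (∏ j ∈ Finset.univ.erase i, (if n j = 0 then 1 else f j * g j)).natDegree :=
        natDegree_mul_le
    _ ≤ ((C ((n i : ℂ))).natDegree + (derivative (f i) * g i - f i * derivative (g i)).natDegree)
        + (∏ j ∈ Finset.univ.erase i, (if n j = 0 then 1 else f j * g j)).natDegree :=
        Nat.add_le_add_right natDegree_mul_le _
    _ ≤ _ := by
        rw [natDegree_C]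
        omega

/-- Corollary 2.9 (multiplicities of zeros of `h₁^{n₁}⋯ h_ℓ^{n_ℓ} − 1` for rational
functions `hᵢ = fᵢ/gᵢ` with disjoint zero sets of numerators and denominators):
every root of `∏ fᵢ^{nᵢ} − ∏ gᵢ^{nᵢ}` has multiplicity at most `∑ (deg fᵢ + deg gᵢ)`. -/
theorem stmt_12 (ℓ : ℕ) (f g : Fin ℓ → Polynomial ℂ)
    (hf : ∀ i, f i ≠ 0) (hg : ∀ i, g i ≠ 0)
    (hZ : ∀ t : ℂ, ¬ ((∏ i, f i).eval t = 0 ∧ (∏ i, g i).eval t = 0))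
    (n : Fin ℓ → ℕ) (t : ℂ) :
    (∏ i, f i ^ n i - ∏ i, g i ^ n i).rootMultiplicity t ≤
      ∑ i, ((f i).natDegree + (g i).natDegree) := by
  classical
  set F := ∏ i, f i ^ n i with hFdef
  set G := ∏ i, g i ^ n i with hGdef
  set N := ∑ i, ((f i).natDegree + (g i).natDegree) with hNdef
  by_cases hP : F - G = 0
  · simp [hP]
  -- small-degree case N = 0
  by_cases hN0 : N = 0
  · have hall := Finset.sum_eq_zero_iff.mp (hNdef.symm.trans hN0)
    have hdF : F.natDegree = 0 := by
      refine Nat.le_zero.mp ((natDegree_prod_le _ _).trans (le_of_eq ?_))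
      refine Finset.sum_eq_zero fun i _ => ?_
      rw [natDegree_pow]
      have h := hall i (Finset.mem_univ i)
      have : (f i).natDegree = 0 := by omega
      rw [this, mul_zero]
    have hdG : G.natDegree = 0 := by
      refine Nat.le_zero.mp ((natDegree_prod_le _ _).trans (le_of_eq ?_))
      refine Finset.sum_eq_zero fun i _ => ?_
      rw [natDegree_pow]
      have h := hall i (Finset.mem_univ i)
      have : (g i).natDegree = 0 := by omega
      rw [this, mul_zero]
    have h1 : (F - G).natDegree = 0 := by
      have := natDegree_sub_le F G
      omega
    have := aux_rm_le_deg (F - G) hP t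
    omega
  -- case F(t) = 0
  by_cases hFt : F.eval t = 0
  · have h1 : ∃ i, ((f i).eval t) ^ n i = 0 := by
      rw [hFdef, eval_prod] at hFt
      obtain ⟨i, _, hi⟩ := Finset.prod_eq_zero_iff.mp (by simpa using hFt)
      exact ⟨i, by simpa using hi⟩
    obtain ⟨i, hi⟩ := h1
    have hfi : (f i).eval t = 0 := (pow_eq_zero_iff'.mp hi).1
    have hZf : (∏ i, f i).eval t = 0 := by
      rw [eval_prod]; exact Finset.prod_eq_zero (Finset.mem_univ i) hfi
    have hZg : (∏ i, g i).eval t ≠ 0 := fun h => hZ t ⟨hZf, h⟩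
    have hgt : ∀ j, (g j).eval t ≠ 0 := by
      rw [eval_prod, Finset.prod_ne_zero_iff] at hZg
      exact fun j => hZg j (Finset.mem_univ j)
    have hGt : G.eval t ≠ 0 := by
      rw [hGdef, eval_prod]
      exact Finset.prod_ne_zero_iff.mpr fun j _ => by
        simpa using pow_ne_zero (n j) (hgt j)
    have hPt : ¬ (F - G).IsRoot t := by
      simp only [IsRoot, eval_sub, hFt, zero_sub, neg_eq_zero]
      exact hGt
    rw [rootMultiplicity_eq_zero hPt]
    exact Nat.zero_le _
  -- case G(t) = 0
  by_cases hGt : G.eval t = 0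
  · have hPt : ¬ (F - G).IsRoot t := by
      simp only [IsRoot, eval_sub, hGt, sub_zero]
      exact hFt
    rw [rootMultiplicity_eq_zero hPt]
    exact Nat.zero_le _
  -- main case
  have hft : ∀ i, n i ≠ 0 → (f i).eval t ≠ 0 := by
    intro i hni hfi
    apply hFt
    rw [hFdef, eval_prod]
    exact Finset.prod_eq_zero (Finset.mem_univ i) (by simp [eval_pow, hfi, zero_pow hni])
  have hgt : ∀ i, n i ≠ 0 → (g i).eval t ≠ 0 := by
    intro i hni hgi
    apply hGt
    rw [hGdef, eval_prod]
    exact Finset.prod_eq_zero (Finset.mem_univ i) (by simp [eval_pow, hgi, zero_pow hni])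
  set e := (F - G).rootMultiplicity t with hedef
  rcases Nat.eq_zero_or_pos e with he | he
  · omega
  have hPt : (F - G).IsRoot t := (rootMultiplicity_pos hP).mp he
  set E := ∏ i, (f i * g i) ^ (n i - 1) with hEdef
  set W := ∑ i, C ((n i : ℂ)) * (derivative (f i) * g i - f i * derivative (g i)) *
      ∏ j ∈ Finset.univ.erase i, (if n j = 0 then 1 else f j * g j) with hWdef
  have hkey : derivative F * G - F * derivative G = E * W := aux_key ℓ f g n
  have hQP : derivative F * G - F * derivative G
      = G * derivative (F - G) - derivative G * (F - G) := by
    rw [derivative_sub]; ring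
  by_cases hW : W = 0
  · exfalso
    have hQ0 : G * derivative (F - G) = derivative G * (F - G) := by
      have h0 : G * derivative (F - G) - derivative G * (F - G) = 0 := by
        rw [← hQP, hkey, hW, mul_zero]
      exact sub_eq_zero.mp h0
    have hP' : derivative (F - G) ≠ 0 := by
      intro h0
      have h1 : (F - G).natDegree = 0 := natDegree_eq_zero_of_derivative_eq_zero h0
      obtain ⟨a, ha⟩ := natDegree_eq_zero.mp h1
      apply hP
      rw [← ha] at hPt ⊢
      simpa using hPt
    have hG0 : G ≠ 0 := fun h => hGt (by rw [h]; simp)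
    have hGP' : G * derivative (F - G) ≠ 0 := mul_ne_zero hG0 hP'
    have hd : (X - C t) ^ e ∣ G * derivative (F - G) := by
      rw [hQ0]
      exact Dvd.dvd.mul_left (pow_rootMultiplicity_dvd _ t) _
    have h5 : e ≤ rootMultiplicity t (G * derivative (F - G)) :=
      (le_rootMultiplicity_iff hGP').2 hd
    rw [rootMultiplicity_mul hGP', rootMultiplicity_eq_zero hGt] at h5
    have h7 : rootMultiplicity t (derivative (F - G)) = e - 1 :=
      derivative_rootMultiplicity_of_root_of_mem_nonZeroDivisors hPt
        (mem_nonZeroDivisors_of_ne_zero (Nat.cast_ne_zero.mpr (by omega)))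
    rw [h7] at h5
    omega
  · have hE0 : E ≠ 0 := by
      rw [hEdef]
      exact Finset.prod_ne_zero_iff.mpr fun i _ =>
        pow_ne_zero _ (mul_ne_zero (hf i) (hg i))
    have hEt : E.eval t ≠ 0 := by
      rw [hEdef, eval_prod]
      refine Finset.prod_ne_zero_iff.mpr fun i _ => ?_
      rcases eq_or_ne (n i) 0 with h | h
      · simp [h]
      · rw [eval_pow, eval_mul]
        exact pow_ne_zero _ (mul_ne_zero (hft i h) (hgt i h))
    have hEW : E * W ≠ 0 := mul_ne_zero hE0 hW
    have hdvd : (X - C t) ^ (e - 1) ∣ E * W := by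
      rw [← hkey, hQP]
      apply dvd_sub
      · exact Dvd.dvd.mul_left
          (pow_sub_one_dvd_derivative_of_pow_dvd (pow_rootMultiplicity_dvd _ t)) G
      · exact Dvd.dvd.mul_left
          ((pow_dvd_pow _ (Nat.sub_le e 1)).trans (pow_rootMultiplicity_dvd _ t)) _
    have h5 : e - 1 ≤ rootMultiplicity t (E * W) := (le_rootMultiplicity_iff hEW).2 hdvd
    rw [rootMultiplicity_mul hEW, rootMultiplicity_eq_zero (fun h => hEt h)] at h5
    have h8 := aux_rm_le_deg W hW t
    have h9 : W.natDegree ≤ N - 1 := aux_deg ℓ f g n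
    omega
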